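/- The double series ∑_{k=1}^∞ (4k+3) · (3/2)_k · ((1/2)_k)^3 / (k! · ((k+1)!)^3) · ∑_{i=1}^k ( 1/(2i−1)^2 − 1/(4(i+1)^2) ) converges to 8/3 − 24/π^2. -/

import Mathlib

open Filter Real

/-- Rising factorial (Pochhammer symbol) `(x)_k = x(x+1)⋯(x+k-1)`. -/
noncomputable def poch (x : ℝ) : ℕ → ℝ
  | 0 => 1
  | k + 1 => poch x k * (x + k)

lemma poch_succ (x : ℝ) (k : ℕ) : poch x (k+1) = poch x k * (x + k) := rfl

lemma poch_half_pos (k : ℕ) : 0 < poch (1/2) k := by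
  induction k with
  | zero => norm_num [poch]
  | succ n ih => rw [poch_succ]; positivity

lemma mul_poch (x : ℝ) (k : ℕ) : x * poch (x+1) k = poch x k * (x + k) := by
  induction k with
  | zero => simp [poch]
  | succ n ih =>
      rw [poch_succ, poch_succ, ← mul_assoc, ih]
      push_cast; ring

lemma poch_three_half (k : ℕ) : poch (3/2) k = 2 * poch (1/2) k * (1/2 + k) := by
  have := mul_poch (1/2) k
  norm_num at this
  linarith [this]

noncomputable def bb (k : ℕ) : ℝ :=
  (poch (1/2) k / k.factorial)^4 * (-16 * k - 32 * k^2)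

noncomputable def gg (k : ℕ) : ℝ :=
  (poch (1/2) k / k.factorial)^4 * (64 * k^2 * (2*k+1) * ((k:ℝ)-1)) / (2*(k:ℝ)-1)^2

noncomputable def dd (i : ℕ) : ℝ := 1 / (2 * (i : ℝ) - 1) ^ 2 - 1 / (4 * ((i : ℝ) + 1) ^ 2)

noncomputable def HH (n : ℕ) : ℝ := ∑ i ∈ Finset.Icc 1 n, dd i

lemma two_k_sub_one_ne (k : ℕ) : (2*(k:ℝ)-1) ≠ 0 := by
  rcases k with _ | n
  · norm_num
  · push_cast; nlinarith [Nat.cast_nonneg (α := ℝ) n]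

lemma stepA (k : ℕ) :
    (4 * (k : ℝ) + 3) * poch (3/2) k * (poch (1/2) k) ^ 3 /
      ((k.factorial : ℝ) * ((k+1).factorial : ℝ) ^ 3) = bb k - bb (k+1) := by
  have hP := (poch_half_pos k).ne'
  have hF : ((k.factorial : ℝ)) ≠ 0 := Nat.cast_ne_zero.2 k.factorial_ne_zero
  have hk1 : ((k:ℝ)+1) ≠ 0 := by positivity
  rw [poch_three_half, bb, bb, poch_succ, Nat.factorial_succ]
  push_cast
  field_simp
  ring

lemma stepB (k : ℕ) :
    dd k * bb k = gg k - gg (k+1) := by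
  have hP := (poch_half_pos k).ne'
  have hF : ((k.factorial : ℝ)) ≠ 0 := Nat.cast_ne_zero.2 k.factorial_ne_zero
  have hk1 : ((k:ℝ)+1) ≠ 0 := by positivity
  have h1 := two_k_sub_one_ne k
  have h2 := two_k_sub_one_ne (k+1)
  push_cast at h2
  rw [dd, bb, gg, gg, poch_succ, Nat.factorial_succ]
  push_cast
  field_simp
  ring

lemma sum_id (n : ℕ) :
    ∑ k ∈ Finset.Icc 1 n,
      (4 * (k : ℝ) + 3) * poch (3/2) k * (poch (1/2) k) ^ 3 /
          ((k.factorial : ℝ) * ((k+1).factorial : ℝ) ^ 3) *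
        ∑ i ∈ Finset.Icc 1 k, (1 / (2 * (i : ℝ) - 1) ^ 2 - 1 / (4 * ((i : ℝ) + 1) ^ 2))
      = -gg (n+1) - bb (n+1) * HH n := by
  induction n with
  | zero =>
      have hg1 : gg 1 = 0 := by norm_num [gg, poch]
      simp [HH, hg1]
  | succ n ih =>
      rw [Finset.sum_Icc_succ_top (by omega : 1 ≤ n+1), ih]
      have hH : HH (n+1) = HH n + dd (n+1) := by
        rw [HH, HH, Finset.sum_Icc_succ_top (by omega : 1 ≤ n+1)]
      rw [show ∑ i ∈ Finset.Icc 1 (n+1),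
            (1 / (2 * (i : ℝ) - 1) ^ 2 - 1 / (4 * ((i : ℝ) + 1) ^ 2)) = HH (n+1) from rfl]
      rw [stepA (n+1), hH]
      have hB := stepB (n+1)
      nlinarith [hB, sq_nonneg (1:ℝ)]

/-! ### Wallis product -/

noncomputable def ww (k : ℕ) : ℝ := (poch (1/2) k / k.factorial)^2 * (2*k+1)

lemma W_ww (k : ℕ) : Real.Wallis.W k * ww k = 1 := by
  induction k with
  | zero => norm_num [Real.Wallis.W, ww, poch]
  | succ n ih =>
      have hP := (poch_half_pos n).ne'
      have hF : ((n.factorial : ℝ)) ≠ 0 := Nat.cast_ne_zero.2 n.factorial_ne_zero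
      have h1 : (2*(n:ℝ)+1) ≠ 0 := by positivity
      have h2 : (2*(n:ℝ)+3) ≠ 0 := by positivity
      have h3 : ((n:ℝ)+1) ≠ 0 := by positivity
      rw [Real.Wallis.W_succ, ww, poch_succ, Nat.factorial_succ]
      rw [ww] at ih
      push_cast
      field_simp
      field_simp at ih
      linear_combination ((2*(n:ℝ)+1)*(2*(n:ℝ)+3)) * ih

lemma tendsto_ww : Tendsto ww atTop (nhds (2/π)) := by
  have h : ∀ k, ww k = (Real.Wallis.W k)⁻¹ := by
    intro k
    have := W_ww k
    have hW := (Real.Wallis.W_pos k).ne'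
    field_simp at this ⊢
    linarith [this]
  rw [show (2:ℝ)/π = (π/2)⁻¹ by rw [inv_div]]
  exact funext h ▸ (Real.Wallis.tendsto_W_nhds_pi_div_two.inv₀ (by positivity))

lemma tendsto_ww_sq : Tendsto (fun k => ww k ^ 2) atTop (nhds (4/π^2)) := by
  have := tendsto_ww.mul tendsto_ww
  have h : (2:ℝ)/π * (2/π) = 4/π^2 := by
    rw [div_mul_div_comm]; norm_num; ring
  rw [h] at this
  exact this.congr (fun k => (sq (ww k)).symm)

lemma tendsto_bb : Tendsto bb atTop (nhds (-32/π^2)) := by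
  have hb : ∀ k : ℕ, bb k = ww k ^ 2 * (-16 * k / (2*k+1)) := by
    intro k
    have h1 : (2*(k:ℝ)+1) ≠ 0 := by positivity
    rw [bb, ww]
    field_simp
    ring
  have hψ : Tendsto (fun n : ℕ => -16 * (n:ℝ) / (2*n+1)) atTop (nhds (-8)) := by
    have hc : ContinuousAt (fun x : ℝ => -16 / (2 + x)) 0 := by
      apply ContinuousAt.div continuousAt_const (by fun_prop)
      norm_num
    have := hc.tendsto.comp tendsto_one_div_atTop_nhds_zero_nat
    norm_num at this
    apply this.congr'
    filter_upwards [eventually_ge_atTop 1] with n hn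
    have hn' : (n:ℝ) ≠ 0 := by positivity
    have h1 : (2*(n:ℝ)+1) ≠ 0 := by positivity
    simp only [Function.comp]
    field_simp
  have := tendsto_ww_sq.mul hψ
  have he : (4:ℝ)/π^2 * (-8) = -32/π^2 := by ring
  rw [he] at this
  exact this.congr (fun k => (hb k).symm)

lemma tendsto_gg : Tendsto gg atTop (nhds (32/π^2)) := by
  have hb : ∀ k : ℕ, gg k = ww k ^ 2 * (64 * k^2 * ((k:ℝ)-1) / ((2*k+1) * (2*(k:ℝ)-1)^2)) := by
    intro k
    have h1 : (2*(k:ℝ)+1) ≠ 0 := by positivity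
    have h2 := two_k_sub_one_ne k
    rw [gg, ww]
    field_simp
  have hψ : Tendsto (fun n : ℕ => 64 * (n:ℝ)^2 * ((n:ℝ)-1) / ((2*n+1) * (2*(n:ℝ)-1)^2))
      atTop (nhds 8) := by
    have hc : ContinuousAt (fun x : ℝ => 64 * (1 - x) / ((2 + x) * (2 - x)^2)) 0 := by
      apply ContinuousAt.div (by fun_prop) (by fun_prop)
      norm_num
    have := hc.tendsto.comp tendsto_one_div_atTop_nhds_zero_nat
    norm_num at this
    apply this.congr'
    filter_upwards [eventually_ge_atTop 1] with n hn
    have hn' : (n:ℝ) ≠ 0 := by positivity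
    have h1 : (2*(n:ℝ)+1) ≠ 0 := by positivity
    have h2 := two_k_sub_one_ne n
    have hle : (1:ℝ)/n ≤ 1 := by
      rw [div_le_one (by positivity)]; exact_mod_cast hn
    have h3 : (2 - 1/(n:ℝ)) ≠ 0 := by nlinarith
    have h4 : (2 + 1/(n:ℝ)) ≠ 0 := by positivity
    simp only [Function.comp]
    field_simp
  have := tendsto_ww_sq.mul hψ
  have he : (4:ℝ)/π^2 * 8 = 32/π^2 := by ring
  rw [he] at this
  exact this.congr (fun k => (hb k).symm)

/-! ### The Basel-type sums -/

lemma hasSum_shifted : HasSum (fun n : ℕ => 1/((n:ℝ)+1)^2) (π^2/6) := by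
  have h2 := (hasSum_nat_add_iff' (f := fun n : ℕ => (1:ℝ)/(n:ℝ)^2) 1).2 hasSum_zeta_two
  simp only [Finset.range_one, Finset.sum_singleton, Nat.cast_zero] at h2
  norm_num at h2
  exact h2.congr_fun (by intro n; norm_num)

lemma hasSum_even : HasSum (fun k : ℕ => 1/((2*k:ℕ):ℝ)^2) (π^2/24) := by
  have := hasSum_zeta_two.mul_left (1/4 : ℝ)
  have h : π^2/24 = 1/4 * (π^2/6) := by ring
  rw [h]
  refine this.congr_fun fun k => ?_
  rcases Nat.eq_zero_or_pos k with hk | hk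
  · subst hk; norm_num
  · have : ((k:ℝ)) ≠ 0 := Nat.cast_ne_zero.2 hk.ne'
    push_cast
    field_simp
    ring

lemma summable_odd : Summable (fun k : ℕ => 1/(2*(k:ℝ)+1)^2) := by
  have hg : Summable (fun k : ℕ => 1/((k:ℝ)+1)^2) := hasSum_shifted.summable
  refine hg.of_nonneg_of_le (fun k => by positivity) (fun k => ?_)
  apply one_div_le_one_div_of_le (by positivity)
  have : (0:ℝ) ≤ k := Nat.cast_nonneg k
  nlinarith

lemma hasSum_odd : HasSum (fun k : ℕ => 1/(2*(k:ℝ)+1)^2) (π^2/8) := by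
  have ho : HasSum (fun k : ℕ => 1/(2*(k:ℝ)+1)^2) (∑' k : ℕ, 1/(2*(k:ℝ)+1)^2) :=
    summable_odd.hasSum
  have he' : HasSum (fun k : ℕ => (fun n : ℕ => 1/(n:ℝ)^2) (2*k)) (π^2/24) := by
    refine hasSum_even.congr_fun fun k => ?_
    norm_num
  have ho' : HasSum (fun k : ℕ => (fun n : ℕ => 1/(n:ℝ)^2) (2*k+1))
      (∑' k : ℕ, 1/(2*(k:ℝ)+1)^2) := by
    refine ho.congr_fun fun k => ?_
    push_cast
    ring_nf
  have htot := HasSum.even_add_odd (f := fun n : ℕ => 1/(n:ℝ)^2) he' ho'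
  have := htot.unique hasSum_zeta_two
  have hv : ∑' k : ℕ, 1/(2*(k:ℝ)+1)^2 = π^2/8 := by linarith
  rwa [hv] at ho

lemma hasSum_dd : HasSum dd (π^2/12 + 1) := by
  have h1 : HasSum (fun i : ℕ => 1 / (2 * (i : ℝ) - 1) ^ 2) (π^2/8 + 1) := by
    have hpre : HasSum (fun n : ℕ => 1 / (2 * ((n+1 : ℕ) : ℝ) - 1) ^ 2) (π^2/8) := by
      refine hasSum_odd.congr_fun fun k => ?_
      push_cast; ring_nf
    have := (hasSum_nat_add_iff (f := fun i : ℕ => 1 / (2 * (i : ℝ) - 1) ^ 2) 1).1 hpre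
    simp only [Finset.range_one, Finset.sum_singleton, Nat.cast_zero] at this
    norm_num at this
    simpa [one_div] using this
  have h2 : HasSum (fun i : ℕ => 1 / (4 * ((i : ℝ) + 1) ^ 2)) (π^2/24) := by
    have := hasSum_shifted.mul_left (1/4 : ℝ)
    have h : π^2/24 = 1/4 * (π^2/6) := by ring
    rw [h]
    refine this.congr_fun fun k => ?_
    have : ((k:ℝ)+1) ≠ 0 := by positivity
    field_simp
  have := h1.sub h2
  have h : π^2/8 + 1 - π^2/24 = π^2/12 + 1 := by ring
  rwa [h] at this

lemma tendsto_HH : Tendsto HH atTop (nhds (π^2/12 + 1/4)) := by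
  have hshift := (hasSum_nat_add_iff' (f := dd) 1).2 hasSum_dd
  simp only [Finset.range_one, Finset.sum_singleton] at hshift
  have hd0 : dd 0 = 3/4 := by norm_num [dd]
  rw [hd0, show π^2/12 + 1 - 3/4 = π^2/12 + 1/4 by ring] at hshift
  have := hshift.tendsto_sum_nat
  refine this.congr fun n => ?_
  rw [HH, ← Finset.Ico_add_one_right_eq_Icc, Finset.sum_Ico_eq_sum_range]
  simp [add_comm]

theorem thm_2_3_3 :
    Tendsto (fun n : ℕ => ∑ k ∈ Finset.Icc 1 n,
      (4 * (k : ℝ) + 3) * poch (3/2) k * (poch (1/2) k) ^ 3 /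
          ((k.factorial : ℝ) * ((k+1).factorial : ℝ) ^ 3) *
        ∑ i ∈ Finset.Icc 1 k, (1 / (2 * (i : ℝ) - 1) ^ 2 - 1 / (4 * ((i : ℝ) + 1) ^ 2)))
      atTop (nhds (8/3 - 24 / π ^ 2)) := by
  have hgg : Tendsto (fun n : ℕ => gg (n+1)) atTop (nhds (32/π^2)) :=
    tendsto_gg.comp (tendsto_add_atTop_nat 1)
  have hbb : Tendsto (fun n : ℕ => bb (n+1)) atTop (nhds (-32/π^2)) :=
    tendsto_bb.comp (tendsto_add_atTop_nat 1)
  have h := hgg.neg.sub (hbb.mul tendsto_HH)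
  have hπ := Real.pi_ne_zero
  have hval : -(32/π^2) - (-32/π^2) * (π^2/12 + 1/4) = 8/3 - 24/π^2 := by
    field_simp
    ring
  rw [hval] at h
  refine h.congr fun n => ?_
  exact (sum_id n).symm
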